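/- arXiv:1801.10124 — 3 statements merged into one kernel-verified Lean document; each statement's English description precedes it below -/
import Mathlib

section
/- Let R = ℂ[τ, z, z⁻¹] be the Laurent polynomial ring in z over ℂ[τ]. The set of elements f(τ,z) ∈ R such that f(τ, τ·z) also lies in R (i.e. remains a Laurent polynomial, equivalently is regular after the substitution z ↦ τz) is exactly the ℂ-subalgebra generated by x = z and y = τ·z⁻¹; moreover this subalgebra is isomorphic to the polynomial ring ℂ[x,y]. -/
/-!
STATEMENT 0.  `R = ℂ[τ][z,z⁻¹]` is modelled as `LaurentPolynomial (Polynomial ℂ)`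
(the variable `z` is the Laurent variable `T`, and `τ = C Polynomial.X`).
The substitution `z ↦ τ·z` lands in `ℂ[τ,τ⁻¹][z,z⁻¹] = LaurentPolynomial (LaurentPolynomial ℂ)`.
`f(τ,τz)` is "regular" iff it lies in the image of the canonical embedding of `R`.
-/

open LaurentPolynomial

noncomputable section

/-- `R = ℂ[τ][z,z⁻¹]`. -/
abbrev Rring : Type := LaurentPolynomial (Polynomial ℂ)

/-- `S = ℂ[τ,τ⁻¹][z,z⁻¹]`. -/
abbrev Sring : Type := LaurentPolynomial (LaurentPolynomial ℂ)

instance : Algebra (Polynomial ℂ) Sring :=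
  ((LaurentPolynomial.C (R := LaurentPolynomial ℂ)).comp Polynomial.toLaurent).toAlgebra

/-- the unit `z` of `S` -/
def zS : Sringˣ := (isUnit_T (R := LaurentPolynomial ℂ) 1).unit

/-- the unit `τ` of `S` -/
def tS : Sringˣ := ((isUnit_T (R := ℂ) 1).map (LaurentPolynomial.C (R := LaurentPolynomial ℂ))).unit

/-- the canonical embedding `ι : ℂ[τ][z,z⁻¹] → ℂ[τ,τ⁻¹][z,z⁻¹]`, `z ↦ z`. -/
def iota : Rring →ₐ[Polynomial ℂ] Sring :=
  AddMonoidAlgebra.lift (Polynomial ℂ) Sring ℤ ((Units.coeHom Sring).comp (zpowersHom Sringˣ zS))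

/-- the substitution `f(τ,z) ↦ f(τ,τ·z)`. -/
def subst : Rring →ₐ[Polynomial ℂ] Sring :=
  AddMonoidAlgebra.lift (Polynomial ℂ) Sring ℤ
    ((Units.coeHom Sring).comp (zpowersHom Sringˣ (tS * zS)))

/-- `x = z` in `R`. -/
def xR : Rring := T 1

/-- `y = τ·z⁻¹` in `R`. -/
def yR : Rring := LaurentPolynomial.C Polynomial.X * T (-1)

lemma zS_val : (zS : Sring) = T 1 := IsUnit.unit_spec _
lemma tS_val : (tS : Sring) = LaurentPolynomial.C (T 1) := IsUnit.unit_spec _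

/-- `T` as a monoid hom from `Multiplicative ℤ`. -/
def Thom (R : Type*) [CommSemiring R] : Multiplicative ℤ →* LaurentPolynomial R where
  toFun n := T (Multiplicative.toAdd n)
  map_one' := T_zero
  map_mul' a b := T_add _ _

lemma zS_zpow (n : ℤ) : ((zS ^ n : Sringˣ) : Sring) = T n := by
  have h : (Units.coeHom Sring).comp (zpowersHom Sringˣ zS) = Thom (LaurentPolynomial ℂ) :=
    MonoidHom.ext_mint (by simp [Thom, zS_val])
  exact congrFun (congrArg (fun f => f.toFun) h) (Multiplicative.ofAdd n)

/-- `n ↦ C (T n) * T n` as a monoid hom. -/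
def TZhom : Multiplicative ℤ →* Sring where
  toFun n := LaurentPolynomial.C (T (Multiplicative.toAdd n)) * T (Multiplicative.toAdd n)
  map_one' := by
    show LaurentPolynomial.C (T (0:ℤ)) * T (0:ℤ) = 1
    simp [T_zero]
  map_mul' a b := by
    show LaurentPolynomial.C (T (Multiplicative.toAdd a + Multiplicative.toAdd b)) *
      T (Multiplicative.toAdd a + Multiplicative.toAdd b) = _
    rw [T_add, T_add, map_mul]
    ring

lemma tzS_zpow (n : ℤ) :
    (((tS * zS) ^ n : Sringˣ) : Sring) = LaurentPolynomial.C (T n) * T n := by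
  have h : (Units.coeHom Sring).comp (zpowersHom Sringˣ (tS * zS)) = TZhom :=
    MonoidHom.ext_mint (by simp [TZhom, zS_val, tS_val])
  exact congrFun (congrArg (fun f => f.toFun) h) (Multiplicative.ofAdd n)

lemma algebraMap_S (p : Polynomial ℂ) :
    algebraMap (Polynomial ℂ) Sring p = LaurentPolynomial.C (Polynomial.toLaurent p) := rfl

lemma single_eq (R : Type*) [CommSemiring R] (n : ℤ) (r : R) :
    (AddMonoidAlgebra.single n r : LaurentPolynomial R) = LaurentPolynomial.C r * T n :=
  single_eq_C_mul_T r n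

lemma C_eq_single (R : Type*) [CommSemiring R] (r : R) :
    (LaurentPolynomial.C r : LaurentPolynomial R) = AddMonoidAlgebra.single 0 r := by
  rw [single_eq, T_zero, mul_one]

lemma iota_single (n : ℤ) (p : Polynomial ℂ) :
    iota (AddMonoidAlgebra.single n p) = AddMonoidAlgebra.single n (Polynomial.toLaurent p) := by
  rw [show (AddMonoidAlgebra.single n p : Rring) = AddMonoidAlgebra.single n p from rfl, iota,
    AddMonoidAlgebra.lift_single]
  simp only [MonoidHom.coe_comp, Function.comp_apply, zpowersHom_apply, Units.coeHom_apply]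
  rw [toAdd_ofAdd, zS_zpow, Algebra.smul_def, algebraMap_S, single_eq, mul_comm]

lemma subst_single (n : ℤ) (p : Polynomial ℂ) :
    subst (AddMonoidAlgebra.single n p) =
      AddMonoidAlgebra.single n (Polynomial.toLaurent p * T n) := by
  rw [show (AddMonoidAlgebra.single n p : Rring) = AddMonoidAlgebra.single n p from rfl, subst,
    AddMonoidAlgebra.lift_single]
  simp only [MonoidHom.coe_comp, Function.comp_apply, zpowersHom_apply, Units.coeHom_apply]
  rw [toAdd_ofAdd, tzS_zpow, Algebra.smul_def, algebraMap_S, single_eq, map_mul]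
  ring

lemma iota_apply (f : Rring) (n : ℤ) :
    (iota f).coeff n = Polynomial.toLaurent (f.coeff n) := by
  induction f using LaurentPolynomial.induction_on' with
  | add p q hp hq =>
    rw [map_add]
    show (iota p + iota q).coeff n = Polynomial.toLaurent ((p + q).coeff n)
    rw [AddMonoidAlgebra.coeff_add, AddMonoidAlgebra.coeff_add, Finsupp.add_apply, Finsupp.add_apply, hp, hq, map_add]
  | C_mul_T m a =>
    rw [← single_eq, iota_single, AddMonoidAlgebra.coeff_single, Finsupp.single_apply, AddMonoidAlgebra.coeff_single, Finsupp.single_apply, apply_ite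
      Polynomial.toLaurent, map_zero]

lemma subst_apply (f : Rring) (n : ℤ) :
    (subst f).coeff n = Polynomial.toLaurent (f.coeff n) * T n := by
  induction f using LaurentPolynomial.induction_on' with
  | add p q hp hq =>
    rw [map_add]
    show (subst p + subst q).coeff n = _
    rw [AddMonoidAlgebra.coeff_add, Finsupp.add_apply, hp, hq]
    show _ = Polynomial.toLaurent ((p + q).coeff n) * T n
    rw [AddMonoidAlgebra.coeff_add, Finsupp.add_apply, map_add, add_mul]
  | C_mul_T m a =>
    rw [← single_eq, subst_single, AddMonoidAlgebra.coeff_single, Finsupp.single_apply, AddMonoidAlgebra.coeff_single, Finsupp.single_apply]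
    split_ifs with h
    · subst h; rfl
    · simp

/-- The key condition. -/
def Q (f : Rring) : Prop := ∀ n : ℤ, (Polynomial.X : Polynomial ℂ) ^ (-n).toNat ∣ f.coeff n

lemma range_to_Q {f : Rring} (h : subst f ∈ iota.range) : Q f := by
  obtain ⟨g, hg⟩ := h
  intro n
  have hg' : iota g = subst f := hg
  have hn : Polynomial.toLaurent (g.coeff n) = Polynomial.toLaurent (f.coeff n) * T n := by
    rw [← iota_apply, ← subst_apply, hg']
  rcases le_or_gt 0 n with hle | hlt
  · rw [Int.toNat_of_nonpos (by omega), pow_zero]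
    exact one_dvd _
  · refine ⟨g.coeff n, Polynomial.toLaurent_injective ?_⟩
    rw [map_mul, Polynomial.toLaurent_X_pow, hn]
    rw [mul_comm (Polynomial.toLaurent (f.coeff n)) (T n), ← mul_assoc, ← T_add,
      show ((-n).toNat : ℤ) + n = 0 by omega, T_zero, one_mul]

lemma algebraMap_R (c : ℂ) :
    algebraMap ℂ Rring c = LaurentPolynomial.C (Polynomial.C c) := by
  rw [IsScalarTower.algebraMap_apply ℂ (Polynomial ℂ) Rring]
  rfl

lemma C_mem (q : Polynomial ℂ) :
    LaurentPolynomial.C q ∈ Algebra.adjoin ℂ ({xR, yR} : Set Rring) := by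
  have hxy : xR * yR = LaurentPolynomial.C Polynomial.X := by
    rw [xR, yR, ← mul_assoc, mul_comm (T 1), mul_assoc, ← T_add]
    norm_num
  induction q using Polynomial.induction_on with
  | C c => rw [← algebraMap_R]; exact Subalgebra.algebraMap_mem _ c
  | add p q hp hq => rw [map_add]; exact add_mem hp hq
  | monomial m c hm =>
    rw [pow_succ, ← mul_assoc, map_mul, ← hxy]
    exact mul_mem hm (mul_mem (Algebra.subset_adjoin (by simp))
      (Algebra.subset_adjoin (by simp)))

lemma single_mem (n : ℤ) (p : Polynomial ℂ)
    (hd : (Polynomial.X : Polynomial ℂ) ^ (-n).toNat ∣ p) :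
    (AddMonoidAlgebra.single n p : Rring) ∈ Algebra.adjoin ℂ ({xR, yR} : Set Rring) := by
  obtain ⟨q, rfl⟩ := hd
  have h2 : yR ^ (-n).toNat * xR ^ n.toNat
      = LaurentPolynomial.C (Polynomial.X ^ (-n).toNat) * T n := by
    rw [yR, xR, mul_pow, ← map_pow, T_pow, T_pow, mul_assoc, ← T_add,
      show ((-n).toNat : ℤ) * -1 + (n.toNat : ℤ) * 1 = n by omega]
  have key : (AddMonoidAlgebra.single n (Polynomial.X ^ (-n).toNat * q) : Rring)
      = LaurentPolynomial.C q * (yR ^ (-n).toNat * xR ^ n.toNat) := by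
    rw [h2, single_eq, map_mul]; ring
  rw [key]
  have hx : xR ∈ Algebra.adjoin ℂ ({xR, yR} : Set Rring) := Algebra.subset_adjoin (by simp)
  have hy : yR ∈ Algebra.adjoin ℂ ({xR, yR} : Set Rring) := Algebra.subset_adjoin (by simp)
  exact mul_mem (C_mem q) (mul_mem (pow_mem hy _) (pow_mem hx _))

lemma Q_to_adjoin {f : Rring} (h : Q f) :
    f ∈ Algebra.adjoin ℂ ({xR, yR} : Set Rring) := by
  have hf : f = f.coeff.sum (fun n p => AddMonoidAlgebra.single n p) := (AddMonoidAlgebra.sum_coeff_single f).symm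
  rw [hf]
  exact Subalgebra.sum_mem _ fun n _ => single_mem n (f.coeff n) (h n)

lemma subst_xR : subst xR = iota (AddMonoidAlgebra.single 1 Polynomial.X) := by
  rw [show xR = (AddMonoidAlgebra.single 1 (1 : Polynomial ℂ) : Rring) by
      rw [xR, single_eq, map_one, one_mul],
    subst_single, iota_single, map_one, one_mul, Polynomial.toLaurent_X]

lemma subst_yR : subst yR = iota (AddMonoidAlgebra.single (-1) (1 : Polynomial ℂ)) := by
  rw [show yR = (AddMonoidAlgebra.single (-1) (Polynomial.X) : Rring) by rw [yR, single_eq],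
    subst_single, iota_single, map_one, Polynomial.toLaurent_X, ← T_add]
  norm_num

lemma adjoin_to_range {f : Rring}
    (h : f ∈ Algebra.adjoin ℂ ({xR, yR} : Set Rring)) : subst f ∈ iota.range := by
  induction h using Algebra.adjoin_induction with
  | mem a ha =>
    rcases ha with rfl | rfl
    · exact ⟨_, subst_xR.symm⟩
    · exact ⟨_, subst_yR.symm⟩
  | algebraMap c =>
    rw [algebraMap_R, show (LaurentPolynomial.C (Polynomial.C c) : Rring)
        = algebraMap (Polynomial ℂ) Rring (Polynomial.C c) from rfl, AlgHom.commutes]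
    exact ⟨algebraMap (Polynomial ℂ) Rring (Polynomial.C c), AlgHom.commutes _ _⟩
  | add a b _ _ ha hb => rw [map_add]; exact add_mem ha hb
  | mul a b _ _ ha hb => rw [map_mul]; exact mul_mem ha hb

abbrev Apoly := MvPolynomial (Fin 2) ℂ
abbrev Kfield := FractionRing Apoly

set_option synthInstance.maxHeartbeats 1000000 in
set_option maxHeartbeats 1000000 in
lemma indep : AlgebraicIndependent ℂ ![xR, yR] := by
  classical
  set a : Kfield := algebraMap Apoly Kfield (MvPolynomial.X 0) with ha_def
  set b : Kfield := algebraMap Apoly Kfield (MvPolynomial.X 1) with hb_def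
  have ha : IsUnit a := by
    rw [isUnit_iff_ne_zero, ha_def, Ne,
      map_eq_zero_iff _ (IsFractionRing.injective Apoly Kfield)]
    exact MvPolynomial.X_ne_zero 0
  letI : Algebra (Polynomial ℂ) Kfield := (Polynomial.aeval (a * b)).toRingHom.toAlgebra
  haveI : IsScalarTower ℂ (Polynomial ℂ) Kfield := IsScalarTower.of_algebraMap_eq fun c => by
    show algebraMap ℂ Kfield c = Polynomial.aeval (a * b) (Polynomial.C c)
    rw [Polynomial.aeval_C]
  let h' : Rring →ₐ[Polynomial ℂ] Kfield :=
    AddMonoidAlgebra.lift (Polynomial ℂ) Kfield ℤ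
      ((Units.coeHom Kfield).comp (zpowersHom Kfieldˣ ha.unit))
  let h : Rring →ₐ[ℂ] Kfield := h'.restrictScalars ℂ
  have hmapP : algebraMap (Polynomial ℂ) Kfield Polynomial.X = a * b := by
    show Polynomial.aeval (a * b) Polynomial.X = a * b
    rw [Polynomial.aeval_X]
  have hx : h xR = a := by
    show h' xR = a
    rw [show xR = (AddMonoidAlgebra.single 1 (1 : Polynomial ℂ) : Rring) by
        rw [xR, single_eq, map_one, one_mul]]
    rw [show (AddMonoidAlgebra.single 1 (1:Polynomial ℂ) : Rring)
        = AddMonoidAlgebra.single 1 1 from rfl, AddMonoidAlgebra.lift_single]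
    simp only [MonoidHom.coe_comp, Function.comp_apply, zpowersHom_apply, toAdd_ofAdd,
      Units.coeHom_apply, zpow_one, one_smul]
    exact ha.unit_spec
  have hy : h yR = b := by
    show h' yR = b
    rw [show yR = (AddMonoidAlgebra.single (-1) (Polynomial.X) : Rring) by rw [yR, single_eq]]
    rw [show (AddMonoidAlgebra.single (-1) (Polynomial.X : Polynomial ℂ) : Rring)
        = AddMonoidAlgebra.single (-1) Polynomial.X from rfl, AddMonoidAlgebra.lift_single]
    simp only [MonoidHom.coe_comp, Function.comp_apply, zpowersHom_apply, toAdd_ofAdd,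
      Units.coeHom_apply]
    rw [Algebra.smul_def, hmapP, zpow_neg_one]
    rw [mul_comm a b, mul_assoc, ha.mul_val_inv, mul_one]
  apply AlgebraicIndependent.of_comp h
  have hcomp : (⇑h ∘ ![xR, yR]) = fun i : Fin 2 => algebraMap Apoly Kfield (MvPolynomial.X i) := by
    funext i
    fin_cases i
    · simpa using hx
    · simpa using hy
  rw [hcomp]
  exact ((IsScalarTower.toAlgHom ℂ Apoly Kfield).algebraicIndependent_iff
    (IsFractionRing.injective Apoly Kfield)).2 (MvPolynomial.algebraicIndependent_X (Fin 2) ℂ)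

lemma range_xy : Set.range ![xR, yR] = ({xR, yR} : Set Rring) := by
  ext u
  constructor
  · rintro ⟨i, rfl⟩
    fin_cases i
    · left; rfl
    · right; rfl
  · rintro (rfl | rfl)
    · exact ⟨0, rfl⟩
    · exact ⟨1, rfl⟩

/-- The set of `f(τ,z) ∈ ℂ[τ][z,z⁻¹]` such that `f(τ,τz)` is again regular
is exactly the `ℂ`-subalgebra generated by `x = z` and `y = τ z⁻¹`, and this subalgebra is
isomorphic to the polynomial ring `ℂ[x,y]` (in two variables), via `x ↦ x`, `y ↦ y`. -/
theorem statement0 :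
    (∀ f : Rring, subst f ∈ iota.range ↔
      f ∈ Algebra.adjoin ℂ ({xR, yR} : Set Rring)) ∧
    ∃ e : MvPolynomial (Fin 2) ℂ ≃ₐ[ℂ] Algebra.adjoin ℂ ({xR, yR} : Set Rring),
      e (MvPolynomial.X 0) = ⟨xR, Algebra.subset_adjoin (by simp)⟩ ∧
      e (MvPolynomial.X 1) = ⟨yR, Algebra.subset_adjoin (by simp)⟩ := by
  constructor
  · intro f
    exact ⟨fun h => Q_to_adjoin (range_to_Q h), adjoin_to_range⟩
  · refine ⟨indep.aevalEquiv.trans (Subalgebra.equivOfEq _ _ (by rw [range_xy])), ?_, ?_⟩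
    · apply Subtype.ext
      rw [AlgEquiv.trans_apply, Subalgebra.equivOfEq_apply]
      show ((indep.aevalEquiv (MvPolynomial.X 0) : Rring)) = xR
      rw [indep.aevalEquiv_apply_coe]
      simp
    · apply Subtype.ext
      rw [AlgEquiv.trans_apply, Subalgebra.equivOfEq_apply]
      show ((indep.aevalEquiv (MvPolynomial.X 1) : Rring)) = yR
      rw [indep.aevalEquiv_apply_coe]
      simp
end
end

section
/- Let A be the ℂ[h]-algebra generated by z, z⁻¹, τ with relations zz⁻¹ = z⁻¹z = 1 and z·τ = (τ + h)·z. Set X = z and Y = z⁻¹·τ. Then [X, Y] = XY − YX = h, and the ℂ[h]-subalgebra of A generated by X and Y is isomorphic to the Weyl-type algebra ℂ[h]⟨X,Y⟩/([X,Y] − h). -/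
/-!
STATEMENT 7.  `A = ℂ[h]⟨z, z⁻¹, τ⟩ / (zz⁻¹ = z⁻¹z = 1, zτ = (τ+h)z)` (a `RingQuot` of a free
algebra over `ℂ[h] = Polynomial ℂ`), `X = z`, `Y = z⁻¹τ`.  Then `[X,Y] = h` and the
subalgebra generated by `X, Y` is the Weyl-type algebra `ℂ[h]⟨X,Y⟩/([X,Y]−h)`.
-/

open FreeAlgebra

noncomputable section

abbrev Ch : Type := Polynomial ℂ

/-- the defining relations of `A`: generators `0 ↦ z`, `1 ↦ z⁻¹`, `2 ↦ τ` -/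
inductive qtRel : FreeAlgebra Ch (Fin 3) → FreeAlgebra Ch (Fin 3) → Prop
  | mul_inv : qtRel (ι Ch 0 * ι Ch 1) 1
  | inv_mul : qtRel (ι Ch 1 * ι Ch 0) 1
  | comm : qtRel (ι Ch 0 * ι Ch 2)
      ((ι Ch 2 + algebraMap Ch (FreeAlgebra Ch (Fin 3)) Polynomial.X) * ι Ch 0)

/-- `A = ℂ[h]⟨z,z⁻¹,τ⟩` with `zz⁻¹ = z⁻¹z = 1` and `zτ = (τ+h)z` -/
abbrev Aalg : Type := RingQuot qtRel

def Xel : Aalg := RingQuot.mkAlgHom Ch qtRel (ι Ch 0)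
def Yel : Aalg := RingQuot.mkAlgHom Ch qtRel (ι Ch 1 * ι Ch 2)

/-- the single Weyl relation `XY − YX = h`: generators `0 ↦ X`, `1 ↦ Y` -/
inductive weylRel : FreeAlgebra Ch (Fin 2) → FreeAlgebra Ch (Fin 2) → Prop
  | comm : weylRel (ι Ch 0 * ι Ch 1 - ι Ch 1 * ι Ch 0)
      (algebraMap Ch (FreeAlgebra Ch (Fin 2)) Polynomial.X)

/-- the Weyl-type algebra `ℂ[h]⟨X,Y⟩/([X,Y] − h)` -/
abbrev Weyl : Type := RingQuot weylRel

abbrev M : Type := ℤ →₀ Ch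
abbrev E : Type := Module.End Ch M

def Zop : E := Finsupp.lmapDomain Ch Ch (fun n => n + 1)
def Zi : E := Finsupp.lmapDomain Ch Ch (fun n => n - 1)
def cf (m : ℤ) : Ch := Polynomial.C (-(m : ℂ)) * Polynomial.X
def Tau : E := Finsupp.lsum Ch (fun n : ℤ => cf n • Finsupp.lsingle n)

lemma Zop_single (n : ℤ) (r : Ch) : Zop (Finsupp.single n r) = Finsupp.single (n + 1) r := by
  simp only [Zop, Finsupp.lmapDomain_apply, Finsupp.mapDomain_single]

lemma Zi_single (n : ℤ) (r : Ch) : Zi (Finsupp.single n r) = Finsupp.single (n - 1) r := by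
  simp only [Zi, Finsupp.lmapDomain_apply, Finsupp.mapDomain_single]

lemma Tau_single (n : ℤ) (r : Ch) : Tau (Finsupp.single n r) = Finsupp.single n (cf n * r) := by
  simp only [Tau, Finsupp.lsum_single, LinearMap.smul_apply, Finsupp.lsingle_apply,
    Finsupp.smul_single, smul_eq_mul]

lemma cf_succ (n : ℤ) : cf n = cf (n + 1) + Polynomial.X := by
  have h : (-(n : ℂ)) = (-(((n : ℤ) + 1 : ℤ) : ℂ)) + 1 := by push_cast; ring
  simp only [cf, h, map_add, map_one]
  ring

lemma hZZi : Zop * Zi = (1 : E) := by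
  refine Finsupp.lhom_ext fun n r => ?_
  simp only [Module.End.mul_apply, Zi_single, Zop_single, Module.End.one_apply, sub_add_cancel]

lemma hZiZ : Zi * Zop = (1 : E) := by
  refine Finsupp.lhom_ext fun n r => ?_
  simp only [Module.End.mul_apply, Zi_single, Zop_single, Module.End.one_apply, add_sub_cancel_right]

lemma hcommE : Zop * Tau = (Tau + algebraMap Ch E Polynomial.X) * Zop := by
  refine Finsupp.lhom_ext fun n r => ?_
  simp only [Module.End.mul_apply, LinearMap.add_apply, Tau_single, Zop_single,
    Module.algebraMap_end_apply, Finsupp.smul_single, smul_eq_mul, ← Finsupp.single_add]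
  congr 1
  rw [cf_succ n]; ring

namespace St7

abbrev mkA : FreeAlgebra Ch (Fin 3) →ₐ[Ch] Aalg := RingQuot.mkAlgHom Ch qtRel
abbrev mkW : FreeAlgebra Ch (Fin 2) →ₐ[Ch] Weyl := RingQuot.mkAlgHom Ch weylRel

lemma part1 : Xel * Yel - Yel * Xel = algebraMap Ch Aalg Polynomial.X := by
  set u : Aalg := mkA (ι Ch 0) with hu
  set v : Aalg := mkA (ι Ch 1) with hv
  set t : Aalg := mkA (ι Ch 2) with ht
  set HA : Aalg := algebraMap Ch Aalg Polynomial.X with hHA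
  have h1 : u * v = 1 := by
    have := RingQuot.mkAlgHom_rel Ch qtRel.mul_inv
    simpa [map_mul, map_one] using this
  have h2 : v * u = 1 := by
    have := RingQuot.mkAlgHom_rel Ch qtRel.inv_mul
    simpa [map_mul, map_one] using this
  have h3 : u * t = (t + HA) * u := by
    have := RingQuot.mkAlgHom_rel Ch qtRel.comm
    simpa [map_mul, map_add, AlgHom.commutes] using this
  have hY : Yel = v * t := by rw [Yel, map_mul]
  have key : v * t * u = t - HA := by
    have : v * (u * t) = v * ((t + HA) * u) := by rw [h3]
    have h4 : t = v * t * u + HA := by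
      calc t = 1 * t := (one_mul t).symm
        _ = v * u * t := by rw [h2]
        _ = v * (u * t) := by rw [mul_assoc]
        _ = v * ((t + HA) * u) := by rw [h3]
        _ = v * (t * u + HA * u) := by rw [add_mul]
        _ = v * (t * u) + v * (HA * u) := by rw [mul_add]
        _ = v * (t * u) + v * (u * HA) := by rw [Algebra.commutes]
        _ = v * (t * u) + v * u * HA := by rw [← mul_assoc v u HA]
        _ = v * t * u + HA := by rw [h2, one_mul, ← mul_assoc]
    exact eq_sub_of_add_eq (a := v * t * u) (b := t) (c := HA) h4.symm
  have hX : Xel = u := rfl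
  rw [hX, hY, ← mul_assoc, h1, one_mul, key]
  exact sub_sub_cancel t HA

def gE : Fin 3 → E := ![Zop, Zi, Tau]

def phi : Aalg →ₐ[Ch] E :=
  RingQuot.liftAlgHom Ch ⟨FreeAlgebra.lift Ch gE, by
    rintro x y ⟨⟩ <;>
      simp only [map_mul, map_one, map_add, FreeAlgebra.lift_ι_apply, AlgHom.commutes, gE,
        Matrix.cons_val_zero, Matrix.cons_val_one, Matrix.head_cons, Matrix.cons_val_two,
        Matrix.tail_cons]
    · exact hZZi
    · exact hZiZ
    · exact hcommE⟩

def fhom : Weyl →ₐ[Ch] Aalg :=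
  RingQuot.liftAlgHom Ch ⟨FreeAlgebra.lift Ch ![Xel, Yel], by
    rintro x y ⟨⟩
    simp only [map_mul, map_sub, FreeAlgebra.lift_ι_apply, AlgHom.commutes,
      Matrix.cons_val_zero, Matrix.cons_val_one, Matrix.head_cons]
    exact part1⟩

def Pw : Weyl := mkW (ι Ch 0)
def Qw : Weyl := mkW (ι Ch 1)
def Hw : Weyl := algebraMap Ch Weyl Polynomial.X

lemma f_P : fhom Pw = Xel := by
  simp only [fhom, Pw, RingQuot.liftAlgHom_mkAlgHom_apply, FreeAlgebra.lift_ι_apply,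
    Matrix.cons_val_zero]

lemma f_Q : fhom Qw = Yel := by
  simp only [fhom, Qw, RingQuot.liftAlgHom_mkAlgHom_apply, FreeAlgebra.lift_ι_apply,
    Matrix.cons_val_one, Matrix.head_cons, Matrix.cons_val_zero]

def psi : Weyl →ₐ[Ch] E := phi.comp fhom

lemma psi_P : psi Pw = Zop := by
  simp only [psi, AlgHom.comp_apply, f_P, Xel, phi, RingQuot.liftAlgHom_mkAlgHom_apply,
    FreeAlgebra.lift_ι_apply, gE, Matrix.cons_val_zero]

lemma psi_Q : psi Qw = Zi * Tau := by
  simp only [psi, AlgHom.comp_apply, f_Q, Yel, phi, RingQuot.liftAlgHom_mkAlgHom_apply,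
    map_mul, FreeAlgebra.lift_ι_apply, gE, Matrix.cons_val_zero, Matrix.cons_val_one,
    Matrix.head_cons, Matrix.cons_val_two, Matrix.tail_cons]

lemma Hw_comm (w : Weyl) : w * Hw = Hw * w := (Algebra.commutes _ _).symm

lemma PQ_comm : Pw * Qw = Qw * Pw + Hw := by
  have := RingQuot.mkAlgHom_rel Ch weylRel.comm
  simp only [map_sub, map_mul, AlgHom.commutes] at this
  have h : Pw * Qw - Qw * Pw = Hw := this
  rw [← h]; abel

lemma P_pow_Q : ∀ a : ℕ, Pw * Qw ^ (a + 1) = Qw ^ (a + 1) * Pw + (a + 1) • (Hw * Qw ^ a) := by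
  intro a
  induction a with
  | zero => simpa using PQ_comm
  | succ n ih =>
    calc Pw * Qw ^ (n + 2) = (Pw * Qw ^ (n + 1)) * Qw := by rw [pow_succ, mul_assoc]
      _ = (Qw ^ (n + 1) * Pw + (n + 1) • (Hw * Qw ^ n)) * Qw := by rw [ih]
      _ = Qw ^ (n + 1) * (Pw * Qw) + (n + 1) • (Hw * Qw ^ (n + 1)) := by
          rw [add_mul, smul_mul_assoc, mul_assoc, mul_assoc, ← pow_succ]
      _ = Qw ^ (n + 1) * (Qw * Pw) + Qw ^ (n + 1) * Hw + (n + 1) • (Hw * Qw ^ (n + 1)) := by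
          rw [PQ_comm, mul_add, add_assoc]
      _ = Qw ^ (n + 2) * Pw + (n + 2) • (Hw * Qw ^ (n + 1)) := by
          rw [← mul_assoc, ← pow_succ, Hw_comm, succ_nsmul (Hw * Qw ^ (n + 1)) (n + 1)]
          abel

def mono (p : ℕ × ℕ) : Weyl := Qw ^ p.1 * Pw ^ p.2

def Sp : Submodule Ch Weyl := Submodule.span Ch (Set.range mono)

lemma mono_mem (a b : ℕ) : Qw ^ a * Pw ^ b ∈ Sp :=
  Submodule.subset_span ⟨(a, b), rfl⟩

lemma Q_mul_mem : ∀ v ∈ Sp, Qw * v ∈ Sp := by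
  intro v hv
  induction hv using Submodule.span_induction with
  | mem x hx =>
    obtain ⟨⟨a, b⟩, rfl⟩ := hx
    rw [mono, ← mul_assoc, ← pow_succ']
    exact mono_mem _ _
  | zero => simpa using Sp.zero_mem
  | add x y _ _ hx hy => rw [mul_add]; exact Sp.add_mem hx hy
  | smul r x _ hx => rw [mul_smul_comm]; exact Sp.smul_mem r hx

lemma P_mul_mem : ∀ v ∈ Sp, Pw * v ∈ Sp := by
  intro v hv
  induction hv using Submodule.span_induction with
  | mem x hx =>
    obtain ⟨⟨a, b⟩, rfl⟩ := hx
    rcases a with _ | a'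
    · show Pw * (Qw ^ 0 * Pw ^ b) ∈ Sp
      rw [pow_zero, one_mul, ← pow_succ']
      have := mono_mem 0 (b + 1)
      rwa [pow_zero, one_mul] at this
    · show Pw * (Qw ^ (a' + 1) * Pw ^ b) ∈ Sp
      rw [← mul_assoc, P_pow_Q a', add_mul, smul_mul_assoc, mul_assoc, ← pow_succ']
      refine Sp.add_mem (mono_mem _ _) (nsmul_mem ?_ _)
      rw [mul_assoc]
      have h5 : Hw * (Qw ^ a' * Pw ^ b) = Polynomial.X • (Qw ^ a' * Pw ^ b) :=
        (Algebra.smul_def _ _).symm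
      rw [h5]
      exact Sp.smul_mem _ (mono_mem _ _)
  | zero => simpa using Sp.zero_mem
  | add x y _ _ hx hy => rw [mul_add]; exact Sp.add_mem hx hy
  | smul r x _ hx => rw [mul_smul_comm]; exact Sp.smul_mem r hx

lemma Ppow_mul_mem (b : ℕ) : ∀ v ∈ Sp, Pw ^ b * v ∈ Sp := by
  induction b with
  | zero => intro v hv; simpa using hv
  | succ n ih => intro v hv; rw [pow_succ, mul_assoc]; exact ih _ (P_mul_mem v hv)

lemma Qpow_mul_mem (a : ℕ) : ∀ v ∈ Sp, Qw ^ a * v ∈ Sp := by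
  induction a with
  | zero => intro v hv; simpa using hv
  | succ n ih => intro v hv; rw [pow_succ, mul_assoc]; exact ih _ (Q_mul_mem v hv)

lemma mul_mem_Sp : ∀ u ∈ Sp, ∀ v ∈ Sp, u * v ∈ Sp := by
  intro u hu
  induction hu using Submodule.span_induction with
  | mem x hx =>
    obtain ⟨⟨a, b⟩, rfl⟩ := hx
    intro v hv
    rw [mono, mul_assoc]
    exact Qpow_mul_mem a _ (Ppow_mul_mem b v hv)
  | zero => intro v hv; simpa using Sp.zero_mem
  | add x y _ _ hx hy => intro v hv; rw [add_mul]; exact Sp.add_mem (hx v hv) (hy v hv)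
  | smul r x _ hx => intro v hv; rw [smul_mul_assoc]; exact Sp.smul_mem r (hx v hv)

lemma one_mem_Sp : (1 : Weyl) ∈ Sp := by
  have := mono_mem 0 0
  simpa using this

lemma span_top : ∀ w : Weyl, w ∈ Sp := by
  intro w
  obtain ⟨x, rfl⟩ := RingQuot.mkAlgHom_surjective Ch weylRel w
  induction x using FreeAlgebra.induction with
  | grade0 r =>
    rw [AlgHom.commutes, Algebra.algebraMap_eq_smul_one]
    exact Sp.smul_mem r one_mem_Sp
  | grade1 i =>
    fin_cases i
    · have := mono_mem 0 1
      simpa [mono, Pw] using this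
    · have := mono_mem 1 0
      simpa [mono, Qw] using this
  | mul x y hx hy => rw [map_mul]; exact mul_mem_Sp _ hx _ hy
  | add x y hx hy => rw [map_add]; exact Sp.add_mem hx hy

def Yo : E := Zi * Tau

lemma Yo_single (n : ℤ) (r : Ch) : Yo (Finsupp.single n r) = Finsupp.single (n - 1) (cf n * r) := by
  simp only [Yo, Module.End.mul_apply, Tau_single, Zi_single]

lemma Zpow_single (b : ℕ) (n : ℤ) (r : Ch) :
    (Zop ^ b) (Finsupp.single n r) = Finsupp.single (n + b) r := by
  induction b generalizing n with
  | zero => simp only [pow_zero, Module.End.one_apply, Nat.cast_zero, add_zero]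
  | succ m ih =>
    rw [pow_succ, Module.End.mul_apply, Zop_single, ih]
    congr 1
    push_cast
    ring

lemma Yopow_single (a : ℕ) (n : ℤ) (r : Ch) :
    (Yo ^ a) (Finsupp.single n r)
      = Finsupp.single (n - a) ((∏ j ∈ Finset.range a, cf (n - j)) * r) := by
  induction a generalizing n r with
  | zero => simp only [pow_zero, Module.End.one_apply, Nat.cast_zero, sub_zero,
      Finset.range_zero, Finset.prod_empty, one_mul]
  | succ m ih =>
    rw [pow_succ, Module.End.mul_apply, Yo_single, ih, Finset.prod_range_succ']
    have h1 : n - 1 - (m : ℤ) = n - ((m : ℕ) + 1 : ℕ) := by push_cast; ring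
    rw [h1]
    congr 1
    have h2 : ∀ j : ℕ, n - 1 - (j : ℤ) = n - ((j : ℕ) + 1 : ℕ) := by intro j; push_cast; ring
    rw [mul_assoc]
    congr 1
    · exact Finset.prod_congr rfl fun j _ => by rw [h2 j]
    · simp

lemma cf_ne_zero {m : ℤ} (hm : m ≠ 0) : cf m ≠ 0 := by
  refine mul_ne_zero ?_ Polynomial.X_ne_zero
  simp only [ne_eq, Polynomial.C_eq_zero, neg_eq_zero, Int.cast_eq_zero]
  exact hm

lemma cf_zero : cf 0 = 0 := by simp [cf]

lemma psi_inj : Function.Injective psi := by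
  rw [injective_iff_map_eq_zero]
  intro v hv
  obtain ⟨c, hc⟩ := Finsupp.mem_span_range_iff_exists_finsupp.mp (span_top v)
  have hop : (c.sum fun p r => r • (Yo ^ p.1 * Zop ^ p.2)) = 0 := by
    rw [← hv, ← hc, map_finsuppSum]
    refine Finsupp.sum_congr fun p _ => ?_
    refine Eq.symm ?_
    calc psi (c p • mono p) = c p • psi (mono p) := psi.toLinearMap.map_smul _ _
      _ = c p • (Yo ^ p.1 * Zop ^ p.2) := by
          rw [mono, map_mul, map_pow, map_pow, psi_P, psi_Q]
          rfl
  have key : ∀ N k : ℤ, (∑ p ∈ c.support, c p *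
      (if N + (p.2 : ℤ) - p.1 = k then ∏ j ∈ Finset.range p.1, cf (N + p.2 - j) else 0)) = 0 := by
    intro N k
    have h0 : ((c.sum fun p r => r • (Yo ^ p.1 * Zop ^ p.2)) (Finsupp.single N 1)) k = 0 := by
      rw [hop]
      rfl
    rw [Finsupp.sum, LinearMap.sum_apply, Finsupp.finset_sum_apply] at h0
    simp only [LinearMap.smul_apply, Module.End.mul_apply, Zpow_single, Yopow_single,
      mul_one, Finsupp.smul_apply, Finsupp.single_apply, smul_eq_mul] at h0
    exact h0
  have hczero : ∀ a : ℕ, ∀ b : ℕ, c (a, b) = 0 := by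
    intro a
    induction a using Nat.strong_induction_on with
    | _ a ih =>
      intro b
      by_contra hc0
      have hmem : (a, b) ∈ c.support := Finsupp.mem_support_iff.mpr hc0
      set N : ℤ := -((b : ℤ) + 1) with hN
      have hkey := key N (N + b - a)
      have hterm : ∀ p ∈ c.support, p ≠ (a, b) →
          c p * (if N + (p.2 : ℤ) - p.1 = N + b - a
            then ∏ j ∈ Finset.range p.1, cf (N + p.2 - j) else 0) = 0 := by
        intro p hp hne
        rcases p with ⟨a', b'⟩
        rcases lt_or_ge a' a with hlt | hge
        · exact absurd (ih a' hlt b') (Finsupp.mem_support_iff.mp hp)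
        · by_cases hif : (N + (b' : ℤ) - a' = N + b - a)
          · have hd : (b' : ℤ) - a' = (b : ℤ) - a := by omega
            have hgt : a < a' := by
              rcases Nat.eq_or_lt_of_le hge with heq | hlt'
              · exfalso
                apply hne
                have hb : b' = b := by omega
                rw [Prod.ext_iff]
                exact ⟨heq.symm, hb⟩
              · exact hlt'
            have hj : (a' - a - 1 : ℕ) ∈ Finset.range a' := Finset.mem_range.mpr (by omega)
            rw [if_pos hif, Finset.prod_eq_zero hj ?_, mul_zero]
            have hz : N + (b' : ℤ) - ((a' - a - 1 : ℕ) : ℤ) = 0 := by omega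
            rw [hz, cf_zero]
          · rw [if_neg hif, mul_zero]
      rw [Finset.sum_eq_single_of_mem (a, b) hmem hterm, if_pos rfl] at hkey
      have hprod : (∏ j ∈ Finset.range a, cf (N + (b : ℤ) - j)) ≠ 0 := by
        refine Finset.prod_ne_zero_iff.mpr fun j hj => cf_ne_zero (by omega)
      rcases mul_eq_zero.mp hkey with h | h
      · exact hc0 h
      · exact hprod h
  have hc0 : c = 0 := Finsupp.ext fun p => hczero p.1 p.2
  rw [← hc, hc0, Finsupp.sum_zero_index]

lemma f_inj : Function.Injective fhom := by
  have h : psi = phi.comp fhom := rfl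
  intro x y hxy
  apply psi_inj
  rw [h, AlgHom.comp_apply, AlgHom.comp_apply, hxy]

lemma hrange : fhom.range = Algebra.adjoin Ch ({Xel, Yel} : Set Aalg) := by
  have hXmem : Xel ∈ Algebra.adjoin Ch ({Xel, Yel} : Set Aalg) :=
    Algebra.subset_adjoin (by simp)
  have hYmem : Yel ∈ Algebra.adjoin Ch ({Xel, Yel} : Set Aalg) :=
    Algebra.subset_adjoin (by simp)
  have main : ∀ y : FreeAlgebra Ch (Fin 2),
      fhom (mkW y) ∈ Algebra.adjoin Ch ({Xel, Yel} : Set Aalg) := by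
    intro y
    induction y using FreeAlgebra.induction with
    | grade0 r =>
      rw [AlgHom.commutes, AlgHom.commutes]
      exact Subalgebra.algebraMap_mem _ r
    | grade1 i =>
      fin_cases i
      · have h0 : fhom Pw ∈ Algebra.adjoin Ch ({Xel, Yel} : Set Aalg) := by
          rw [f_P]; exact hXmem
        exact h0
      · have h0 : fhom Qw ∈ Algebra.adjoin Ch ({Xel, Yel} : Set Aalg) := by
          rw [f_Q]; exact hYmem
        exact h0
    | mul x y hx hy => rw [map_mul, map_mul]; exact mul_mem hx hy
    | add x y hx hy => rw [map_add, map_add]; exact add_mem hx hy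
  apply le_antisymm
  · rintro x ⟨w, rfl⟩
    obtain ⟨y, rfl⟩ := RingQuot.mkAlgHom_surjective Ch weylRel w
    exact main y
  · rw [Algebra.adjoin_le_iff]
    rintro x (rfl | rfl)
    · exact ⟨Pw, f_P⟩
    · exact ⟨Qw, f_Q⟩

end St7


/-- `[X,Y] = h`, and the `ℂ[h]`-subalgebra of `A` generated by `X = z` and
`Y = z⁻¹τ` is isomorphic to `ℂ[h]⟨X,Y⟩/([X,Y]−h)`, via `X ↦ X`, `Y ↦ Y`. -/
theorem statement7 :
    Xel * Yel - Yel * Xel = algebraMap Ch Aalg Polynomial.X ∧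
    ∃ e : Weyl ≃ₐ[Ch] Algebra.adjoin Ch ({Xel, Yel} : Set Aalg),
      e (RingQuot.mkAlgHom Ch weylRel (ι Ch 0)) = ⟨Xel, Algebra.subset_adjoin (by simp)⟩ ∧
      e (RingQuot.mkAlgHom Ch weylRel (ι Ch 1)) = ⟨Yel, Algebra.subset_adjoin (by simp)⟩ := by
  refine ⟨St7.part1, ?_⟩
  refine ⟨(AlgEquiv.ofInjective St7.fhom St7.f_inj).trans
    (Subalgebra.equivOfEq _ _ St7.hrange), ?_, ?_⟩
  · apply Subtype.ext
    rw [AlgEquiv.trans_apply, Subalgebra.equivOfEq_apply]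
    have h1 : ((AlgEquiv.ofInjective St7.fhom St7.f_inj) St7.Pw : Aalg) = St7.fhom St7.Pw :=
      AlgEquiv.ofInjective_apply _ _ _
    exact h1.trans St7.f_P
  · apply Subtype.ext
    rw [AlgEquiv.trans_apply, Subalgebra.equivOfEq_apply]
    have h1 : ((AlgEquiv.ofInjective St7.fhom St7.f_inj) St7.Qw : Aalg) = St7.fhom St7.Qw :=
      AlgEquiv.ofInjective_apply _ _ _
    exact h1.trans St7.f_Q
end
end

section
/- Let A = ℂ[h]⟨z, z⁻¹, τ⟩ with relation zτ = (τ+h)z, and let c denote the (partially defined) conjugation sending an element P to Γ⁻¹PΓ where conjugation acts on generators by z ↦ τ⁻¹z (and fixes τ, h). An element P ∈ A of z-degree −n (n > 0), written uniquely as a ℂ[h]-linear combination of monomials (z⁻¹τ)ⁿτ^m (m ≥ 0) and (z⁻¹τ)^a z^{a−n} (0 ≤ a < n), has regular image under c (i.e. Γ⁻¹PΓ ∈ A) if and only if the coefficients of all monomials (z⁻¹τ)^a z^{a−n} with 0 ≤ a < n vanish. -/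
/-!
STATEMENT 11.  In the quantized torus `A = ℂ[h]⟨z^±, τ⟩` with `zτ = (τ+h)z`, realized
faithfully inside an algebra `B` containing an invertible `Γ` with `Γτ = τΓ` and
`zΓz⁻¹ = τΓ` (so that `Γ(w+h) = wΓ(w)`), an element `P` of `z`-degree `−n` written as a
`ℂ[h]`-combination of the monomials `(z⁻¹τ)ⁿτ^m` (`m ≥ 0`) and `(z⁻¹τ)^a z^{a−n}`
(`0 ≤ a < n`) has regular image under `P ↦ Γ⁻¹PΓ` — i.e. lands in the subalgebra generated
by `z, z⁻¹, τ` — iff all the coefficients of the monomials `(z⁻¹τ)^a z^{a−n}` vanish.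
Faithfulness is encoded by the linear independence of the monomials `z^k τ^m`.
-/



open Polynomial Finsupp

namespace Statement11Aux

noncomputable section

variable {B : Type*} [Ring B] [Algebra (Polynomial ℂ) B] (u : Bˣ) (t : B)

local notation "R" => Polynomial ℂ

def e (u : Bˣ) (t : B) : ℤ × ℕ → B := fun p => ((u ^ p.1 : Bˣ) : B) * t ^ p.2

def Phi (u : Bˣ) (t : B) : (ℤ →₀ Polynomial R) →ₗ[R] B :=
  Finsupp.lsum R fun l =>
    (LinearMap.mulLeft R ((u ^ l : Bˣ) : B)).comp (Polynomial.aeval t).toLinearMap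

lemma Phi_single (l : ℤ) (q : Polynomial R) :
    Phi u t (Finsupp.single l q) = ((u ^ l : Bˣ) : B) * Polynomial.aeval t q := by
  rw [Phi, Finsupp.lsum_single]; rfl

section rel

variable (hrel : (u : B) * t = (t + algebraMap R B Polynomial.X) * (u : B))
include hrel

lemma t_mul_u : t * (u : B) = (u : B) * (t - algebraMap R B Polynomial.X) := by
  have hc : algebraMap R B Polynomial.X * (u : B) = (u : B) * algebraMap R B Polynomial.X :=
    Algebra.commutes _ _
  rw [mul_sub, hrel, add_mul, hc]
  abel

lemma t_mul_uinv : t * ((u⁻¹ : Bˣ) : B)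
    = ((u⁻¹ : Bˣ) : B) * (t + algebraMap R B Polynomial.X) := by
  calc t * ((u⁻¹ : Bˣ) : B)
      = (((u⁻¹ : Bˣ) : B) * ((u : B) * t)) * ((u⁻¹ : Bˣ) : B) := by
        rw [Units.inv_mul_cancel_left]
    _ = ((u⁻¹ : Bˣ) : B) * (t + algebraMap R B Polynomial.X) := by
        rw [hrel, mul_assoc, Units.mul_inv_cancel_right]

lemma t_mul_zpow (l : ℤ) :
    t * ((u ^ l : Bˣ) : B) = ((u ^ l : Bˣ) : B) * (t - algebraMap R B (l • Polynomial.X)) := by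
  induction l using Int.induction_on with
  | zero => simp
  | succ k ih =>
      have hu : (u ^ ((k : ℤ) + 1) : Bˣ) = u ^ (k : ℤ) * u := by rw [zpow_add_one]
      have hc : algebraMap R B ((k : ℤ) • Polynomial.X) * (u : B)
          = (u : B) * algebraMap R B ((k : ℤ) • Polynomial.X) := Algebra.commutes _ _
      have hstep : (t - algebraMap R B ((k : ℤ) • Polynomial.X)) * (u : B)
          = (u : B) * (t - algebraMap R B (((k : ℤ) + 1) • Polynomial.X)) := by
        rw [sub_mul, t_mul_u u t hrel, hc, ← mul_sub, sub_sub,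
          show ((k : ℤ) + 1) • (Polynomial.X : R) = (k : ℤ) • Polynomial.X + Polynomial.X by
            rw [add_smul, one_smul],
          map_add, add_comm]
      rw [hu, Units.val_mul, ← mul_assoc, ih, mul_assoc, hstep, ← mul_assoc]
  | pred k ih =>
      have hu : (u ^ (-(k : ℤ) - 1) : Bˣ) = u ^ (-(k : ℤ)) * u⁻¹ := by
        rw [← zpow_neg_one, ← zpow_add, sub_eq_add_neg]
      have hc : algebraMap R B ((-(k : ℤ)) • Polynomial.X) * ((u⁻¹ : Bˣ) : B)
          = ((u⁻¹ : Bˣ) : B) * algebraMap R B ((-(k : ℤ)) • Polynomial.X) := Algebra.commutes _ _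
      have hstep : (t - algebraMap R B ((-(k : ℤ)) • Polynomial.X)) * ((u⁻¹ : Bˣ) : B)
          = ((u⁻¹ : Bˣ) : B) * (t - algebraMap R B ((-(k : ℤ) - 1) • Polynomial.X)) := by
        rw [sub_mul, t_mul_uinv u t hrel, hc, ← mul_sub,
          show (-(k : ℤ) - 1) • (Polynomial.X : R)
              = (-(k : ℤ)) • Polynomial.X - Polynomial.X by rw [sub_smul, one_smul],
          map_sub]
        congr 1
        abel
      rw [hu, Units.val_mul, ← mul_assoc, ih, mul_assoc, hstep, ← mul_assoc]

lemma pow_t_mul_zpow (l : ℤ) (m : ℕ) :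
    t ^ m * ((u ^ l : Bˣ) : B)
      = ((u ^ l : Bˣ) : B) * (t - algebraMap R B (l • Polynomial.X)) ^ m := by
  induction m with
  | zero => simp
  | succ m ihm =>
      rw [pow_succ', mul_assoc, ihm, ← mul_assoc, t_mul_zpow u t hrel, mul_assoc, ← pow_succ']

lemma aeval_mul_zpow (l : ℤ) (q : Polynomial R) :
    Polynomial.aeval t q * ((u ^ l : Bˣ) : B)
      = ((u ^ l : Bˣ) : B) * Polynomial.aeval t
          (q.comp ((Polynomial.X : Polynomial R) - Polynomial.C (l • Polynomial.X))) := by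
  induction q using Polynomial.induction_on' with
  | add p q hp hq => rw [map_add, add_mul, hp, hq, Polynomial.add_comp, map_add, mul_add]
  | monomial k r =>
      rw [Polynomial.aeval_monomial,
        show (Polynomial.monomial k r).comp
            ((Polynomial.X : Polynomial R) - Polynomial.C (l • Polynomial.X))
          = Polynomial.C r *
            ((Polynomial.X : Polynomial R) - Polynomial.C (l • Polynomial.X)) ^ k by
          rw [← Polynomial.C_mul_X_pow_eq_monomial, Polynomial.mul_comp, Polynomial.C_comp,
            Polynomial.pow_comp, Polynomial.X_comp],
        map_mul, Polynomial.aeval_C, map_pow,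
        show Polynomial.aeval t
            ((Polynomial.X : Polynomial R) - Polynomial.C (l • Polynomial.X))
          = t - algebraMap R B (l • Polynomial.X) by
          rw [map_sub, Polynomial.aeval_X, Polynomial.aeval_C],
        mul_assoc, pow_t_mul_zpow u t hrel, ← mul_assoc, Algebra.commutes, mul_assoc]

lemma Phi_single_mul_single (k l : ℤ) (q q' : Polynomial R) :
    Phi u t (Finsupp.single k q) * Phi u t (Finsupp.single l q')
      = Phi u t (Finsupp.single (k + l)
          (q.comp ((Polynomial.X : Polynomial R) - Polynomial.C (l • Polynomial.X)) * q')) := by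
  rw [Phi_single, Phi_single, Phi_single, mul_assoc, ← mul_assoc (Polynomial.aeval t q),
    aeval_mul_zpow u t hrel l q, mul_assoc, ← map_mul, ← mul_assoc, ← Units.val_mul, ← zpow_add]

lemma mul_mem_range (F F' : ℤ →₀ Polynomial R) :
    Phi u t F * Phi u t F' ∈ LinearMap.range (Phi u t) := by
  induction F using Finsupp.induction_linear with
  | zero => rw [map_zero, zero_mul]; exact zero_mem _
  | add f g hf hg => rw [map_add, add_mul]; exact add_mem hf hg
  | single k q =>
      induction F' using Finsupp.induction_linear with
      | zero => rw [map_zero, mul_zero]; exact zero_mem _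
      | add f g hf hg => rw [map_add, mul_add]; exact add_mem hf hg
      | single l q' => rw [Phi_single_mul_single u t hrel]; exact ⟨_, rfl⟩

def Salg : Subalgebra R B :=
  Submodule.toSubalgebra (LinearMap.range (Phi u t))
    (⟨Finsupp.single 0 1, by rw [Phi_single]; simp⟩)
    (by
      rintro x y ⟨F, rfl⟩ ⟨F', rfl⟩
      exact mul_mem_range u t hrel F F')

lemma adjoin_le_range :
    Algebra.adjoin R ({(u : B), ((u⁻¹ : Bˣ) : B), t} : Set B) ≤ Salg u t hrel := by
  apply Algebra.adjoin_le
  rintro x (rfl | rfl | rfl)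
  · exact ⟨Finsupp.single 1 1, by rw [Phi_single]; simp⟩
  · exact ⟨Finsupp.single (-1) 1, by rw [Phi_single]; simp⟩
  · exact ⟨Finsupp.single 0 Polynomial.X, by rw [Phi_single]; simp⟩

end rel

def emb (l : ℤ) : ℕ ↪ ℤ × ℕ := ⟨fun j => (l, j), by intro a b h; simpa using h⟩

lemma lc_embDomain (l : ℤ) (q : Polynomial R) :
    Finsupp.linearCombination R (e u t) (Finsupp.embDomain (emb l) q.toFinsupp.coeff)
      = ((u ^ l : Bˣ) : B) * Polynomial.aeval t q := by
  induction q using Polynomial.induction_on' with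
  | add p q hp hq =>
      rw [Polynomial.toFinsupp_add, AddMonoidAlgebra.coeff_add, Finsupp.embDomain_add, map_add, hp, hq, map_add, mul_add]
  | monomial k r =>
      rw [Polynomial.toFinsupp_monomial, AddMonoidAlgebra.coeff_single, Finsupp.embDomain_single,
        Finsupp.linearCombination_single, Polynomial.aeval_monomial, ← mul_assoc,
        ← Algebra.commutes, mul_assoc, ← Algebra.smul_def]
      rfl

def GG (F : ℤ →₀ Polynomial R) : (ℤ × ℕ) →₀ R :=
  F.sum fun l q => Finsupp.embDomain (emb l) q.toFinsupp.coeff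

lemma lc_GG (F : ℤ →₀ Polynomial R) :
    Finsupp.linearCombination R (e u t) (GG F) = Phi u t F := by
  rw [GG, map_finsuppSum, Phi, Finsupp.lsum_apply]
  exact Finsupp.sum_congr fun l _ => (lc_embDomain u t l (F l)).trans rfl

lemma GG_apply (F : ℤ →₀ Polynomial R) (l : ℤ) (j : ℕ) :
    GG F (l, j) = (F l).coeff j := by
  rw [GG, Finsupp.sum_apply, Finsupp.sum, Finset.sum_eq_single l]
  · rw [show ((l, j) : ℤ × ℕ) = emb l j from rfl, Finsupp.embDomain_apply_self]
    rfl
  · intro l' _ hne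
    apply Finsupp.embDomain_notin_range
    rintro ⟨j', hj'⟩
    exact hne (congrArg Prod.fst hj')
  · intro hl
    rw [Finsupp.notMem_support_iff.mp hl]
    simp

lemma Phi_injective (hLI : LinearIndependent R (e u t)) : Function.Injective (Phi u t) := by
  have key : ∀ F, Phi u t F = 0 → F = 0 := by
    intro F hF
    have h2 : GG F = 0 := hLI (by rw [lc_GG u t F, hF, map_zero])
    refine Finsupp.ext fun l => Polynomial.ext fun j => ?_
    rw [← GG_apply F l j, h2]
    simp
  have hker : LinearMap.ker (Phi u t) = ⊥ := LinearMap.ker_eq_bot'.mpr key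
  exact (LinearMap.ker_eq_bot (M := ℤ →₀ Polynomial R) (f := Phi u t)).mp hker

/-- Conjugation `x ↦ g⁻¹ x g` as an algebra homomorphism. -/
def cjA (g : Bˣ) : B →ₐ[R] B where
  toFun x := ((g⁻¹ : Bˣ) : B) * x * (g : B)
  map_one' := by simp
  map_mul' x y := by
    show ((g⁻¹ : Bˣ) : B) * (x * y) * (g : B)
        = ((g⁻¹ : Bˣ) : B) * x * (g : B) * (((g⁻¹ : Bˣ) : B) * y * (g : B))
    rw [mul_assoc (((g⁻¹ : Bˣ) : B) * x),
      show (g : B) * (((g⁻¹ : Bˣ) : B) * y * (g : B)) = y * (g : B) by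
        rw [← mul_assoc, Units.mul_inv_cancel_left]]
    simp only [mul_assoc]
  map_zero' := by simp
  map_add' x y := by
    show ((g⁻¹ : Bˣ) : B) * (x + y) * (g : B) = _
    rw [mul_add, add_mul]
  commutes' r := by
    show ((g⁻¹ : Bˣ) : B) * algebraMap R B r * (g : B) = algebraMap R B r
    rw [← Algebra.commutes, mul_assoc, Units.inv_mul, mul_one]

lemma cjA_apply (g : Bˣ) (x : B) : cjA g x = ((g⁻¹ : Bˣ) : B) * x * (g : B) := rfl

section conj

variable (g : Bˣ)
variable (hgt : (g : B) * t = t * (g : B))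
variable (hgam : (u : B) * (g : B) * ((u⁻¹ : Bˣ) : B) = t * (g : B))

include hgt in
lemma cjA_t : cjA g t = t := by
  rw [cjA_apply, mul_assoc, ← hgt, ← mul_assoc, Units.inv_mul, one_mul]

include hgt hgam in
lemma cjA_u : cjA g (u : B) = t * (u : B) := by
  have h1 : (u : B) * (g : B) = t * (g : B) * (u : B) := by
    rw [← hgam, mul_assoc, Units.inv_mul, mul_one]
  rw [cjA_apply, mul_assoc, h1, ← mul_assoc, ← mul_assoc,
    show ((g⁻¹ : Bˣ) : B) * t * (g : B) = t from cjA_t t g hgt]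

include hgt hgam in
lemma s_mul_tu : cjA g ((u⁻¹ : Bˣ) : B) * (t * (u : B)) = 1 := by
  rw [← cjA_u u t g hgt hgam, ← map_mul, Units.inv_mul, map_one]

include hgt hgam in
lemma spow_mul_tupow (k : ℕ) :
    (cjA g ((u⁻¹ : Bˣ) : B)) ^ k * (t * (u : B)) ^ k = 1 := by
  induction k with
  | zero => simp
  | succ m ih =>
      rw [pow_succ, pow_succ', mul_assoc, ← mul_assoc (cjA g ((u⁻¹ : Bˣ) : B)),
        s_mul_tu u t g hgt hgam, one_mul, ih]

include hgt hgam in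
lemma s_mul_t : cjA g ((u⁻¹ : Bˣ) : B) * t = ((u⁻¹ : Bˣ) : B) := by
  have h := s_mul_tu u t g hgt hgam
  calc cjA g ((u⁻¹ : Bˣ) : B) * t
      = cjA g ((u⁻¹ : Bˣ) : B) * t * ((u : B) * ((u⁻¹ : Bˣ) : B)) := by
        rw [Units.mul_inv, mul_one]
    _ = (cjA g ((u⁻¹ : Bˣ) : B) * (t * (u : B))) * ((u⁻¹ : Bˣ) : B) := by
        simp only [mul_assoc]
    _ = ((u⁻¹ : Bˣ) : B) := by rw [h, one_mul]

include hgt hgam in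
lemma cjA_uinv_t : cjA g (((u⁻¹ : Bˣ) : B) * t) = ((u⁻¹ : Bˣ) : B) := by
  rw [map_mul, cjA_t t g hgt, s_mul_t u t g hgt hgam]

end conj

lemma val_zpow_sub (i n : ℕ) (hi : i < n) :
    ((u ^ ((i : ℤ) - (n : ℤ)) : Bˣ) : B) = (((u⁻¹ : Bˣ) : B)) ^ (n - i) := by
  have h : (i : ℤ) - (n : ℤ) = -(((n - i : ℕ) : ℤ)) := by
    rw [Nat.cast_sub hi.le]; ring
  rw [h, zpow_neg, zpow_natCast, ← inv_pow, Units.val_pow_eq_pow_val]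

/-- `p_0 = 1`, `p_{i+1}(w) = p_i(w - h) * (w - h)`. -/
def pchain : ℕ → Polynomial R
  | 0 => 1
  | (i + 1) => ((pchain i) * Polynomial.X).comp
      ((Polynomial.X : Polynomial R) - Polynomial.C ((1 : ℤ) • Polynomial.X))

lemma pchain_spec (i : ℕ) : (pchain i).Monic ∧ (pchain i).natDegree = i := by
  induction i with
  | zero => exact ⟨monic_one, natDegree_one⟩
  | succ m ih =>
      have hm : (pchain m * Polynomial.X).Monic := ih.1.mul monic_X
      have hdeg : (pchain m * Polynomial.X).natDegree = m + 1 := by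
        rw [ih.1.natDegree_mul monic_X, ih.2, Polynomial.natDegree_X]
      refine ⟨hm.comp_X_sub_C _, ?_⟩
      rw [show pchain (m + 1) = (pchain m * Polynomial.X).comp
            ((Polynomial.X : Polynomial R) - Polynomial.C ((1 : ℤ) • Polynomial.X)) from rfl,
        Polynomial.natDegree_comp, hdeg, Polynomial.natDegree_X_sub_C, mul_one]

section rel2

variable (hrel : (u : B) * t = (t + algebraMap R B Polynomial.X) * (u : B))
include hrel

lemma uinv_pow_mul_tu_pow (i : ℕ) :
    (((u⁻¹ : Bˣ) : B)) ^ i * (t * (u : B)) ^ i = Polynomial.aeval t (pchain i) := by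
  induction i with
  | zero => simp [pchain]
  | succ m ih =>
      calc (((u⁻¹ : Bˣ) : B)) ^ (m + 1) * (t * (u : B)) ^ (m + 1)
          = ((u⁻¹ : Bˣ) : B) * (((((u⁻¹ : Bˣ) : B)) ^ m * (t * (u : B)) ^ m) * (t * (u : B))) := by
            rw [pow_succ', pow_succ]; simp only [mul_assoc]
        _ = ((u⁻¹ : Bˣ) : B) * ((Polynomial.aeval t (pchain m) * t) * (u : B)) := by
            rw [ih]; simp only [mul_assoc]
        _ = ((u⁻¹ : Bˣ) : B) * (Polynomial.aeval t (pchain m * Polynomial.X) * (u : B)) := by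
            rw [map_mul, Polynomial.aeval_X]
        _ = ((u⁻¹ : Bˣ) : B) * (((u ^ (1 : ℤ) : Bˣ) : B) * Polynomial.aeval t
              ((pchain m * Polynomial.X).comp
                ((Polynomial.X : Polynomial R) - Polynomial.C ((1 : ℤ) • Polynomial.X)))) := by
            rw [show ((u : B)) = ((u ^ (1 : ℤ) : Bˣ) : B) from by rw [zpow_one],
              aeval_mul_zpow u t hrel]
        _ = Polynomial.aeval t (pchain (m + 1)) := by
            rw [← mul_assoc, zpow_one, Units.inv_mul, one_mul]
            rfl

lemma tu_pow_eq (k : ℕ) :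
    (t * (u : B)) ^ k = ((u ^ (k : ℤ) : Bˣ) : B) * Polynomial.aeval t (pchain k) := by
  calc (t * (u : B)) ^ k
      = (((u ^ (k : ℤ) : Bˣ) : B) * (((u⁻¹ : Bˣ) : B)) ^ k) * (t * (u : B)) ^ k := by
        rw [show ((((u⁻¹ : Bˣ) : B)) ^ k) = (((u ^ k)⁻¹ : Bˣ) : B) from by
            rw [← inv_pow, Units.val_pow_eq_pow_val],
          zpow_natCast, Units.mul_inv, one_mul]
    _ = ((u ^ (k : ℤ) : Bˣ) : B) * ((((u⁻¹ : Bˣ) : B)) ^ k * (t * (u : B)) ^ k) := by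
        rw [mul_assoc]
    _ = ((u ^ (k : ℤ) : Bˣ) : B) * Polynomial.aeval t (pchain k) := by
        rw [uinv_pow_mul_tu_pow u t hrel k]

lemma Phi_mul_tu_pow (n : ℕ) (F : ℤ →₀ Polynomial R) :
    Phi u t F * (t * (u : B)) ^ n
      = Phi u t (F.sum fun k q => Finsupp.single (k + (n : ℤ))
          (q.comp ((Polynomial.X : Polynomial R) - Polynomial.C ((n : ℤ) • Polynomial.X))
            * pchain n)) := by
  induction F using Finsupp.induction_linear with
  | zero => rw [map_zero, zero_mul, Finsupp.sum_zero_index, map_zero]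
  | add f f' hf hf' =>
      rw [map_add, add_mul, hf, hf', Finsupp.sum_add_index', map_add]
      · intro k
        rw [Polynomial.zero_comp, zero_mul, Finsupp.single_zero]
      · intro k q q'
        rw [Polynomial.add_comp, add_mul, Finsupp.single_add]
  | single k q =>
      rw [Finsupp.sum_single_index
          (by rw [Polynomial.zero_comp, zero_mul, Finsupp.single_zero]),
        tu_pow_eq u t hrel n, Phi_single, Phi_single, mul_assoc,
        ← mul_assoc (Polynomial.aeval t q), aeval_mul_zpow u t hrel, mul_assoc, ← map_mul,
        ← mul_assoc, ← Units.val_mul, ← zpow_add]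

end rel2

lemma fin_indep {n : ℕ} (b : Fin n → R)
    (h : ∑ i : Fin n, b i • pchain (i : ℕ) = 0) : b = 0 := by
  by_contra hb
  have hne : (Finset.univ.filter fun i : Fin n => b i ≠ 0).Nonempty := by
    rcases Function.ne_iff.mp hb with ⟨i, hi⟩
    exact ⟨i, Finset.mem_filter.mpr ⟨Finset.mem_univ _, hi⟩⟩
  set S := Finset.univ.filter fun i : Fin n => b i ≠ 0 with hS
  set i₀ := S.max' hne with hi₀
  have hmem : i₀ ∈ S := S.max'_mem hne
  have hb₀ : b i₀ ≠ 0 := (Finset.mem_filter.mp hmem).2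
  have hcoeff := congrArg (fun p => Polynomial.coeff p (i₀ : ℕ)) h
  simp only [Polynomial.finset_sum_coeff, Polynomial.coeff_zero] at hcoeff
  have hsum : (∑ i : Fin n, (b i • pchain (i : ℕ)).coeff (i₀ : ℕ)) = b i₀ := by
    rw [Finset.sum_eq_single i₀]
    · have h2 := (pchain_spec ((i₀ : Fin n) : ℕ)).1.coeff_natDegree
      rw [(pchain_spec ((i₀ : Fin n) : ℕ)).2] at h2
      rw [Polynomial.coeff_smul, h2, smul_eq_mul, mul_one]
    · intro i _ hne'
      by_cases hbi : b i = 0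
      · rw [Polynomial.coeff_smul, hbi, zero_smul]
      · have hiS : i ∈ S := Finset.mem_filter.mpr ⟨Finset.mem_univ _, hbi⟩
        have hle : i ≤ i₀ := S.le_max' i hiS
        have hlt : (i : ℕ) < (i₀ : ℕ) := Fin.lt_iff_val_lt_val.mp (lt_of_le_of_ne hle hne')
        rw [Polynomial.coeff_smul,
          Polynomial.coeff_eq_zero_of_natDegree_lt (by rw [(pchain_spec _).2]; exact hlt),
          smul_zero]
    · intro habs
      exact absurd (Finset.mem_univ i₀) habs
  rw [hsum] at hcoeff
  exact hb₀ hcoeff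

lemma mono_mem_adjoin (n m : ℕ) :
    (((u⁻¹ : Bˣ) : B)) ^ n * t ^ m ∈
      Algebra.adjoin R ({(u : B), ((u⁻¹ : Bˣ) : B), t} : Set B) := by
  exact mul_mem (pow_mem (Algebra.subset_adjoin (by simp)) _)
    (pow_mem (Algebra.subset_adjoin (by simp)) _)

lemma mono_mem_range (n m : ℕ) :
    (((u⁻¹ : Bˣ) : B)) ^ n * t ^ m ∈ LinearMap.range (Phi u t) := by
  refine ⟨Finsupp.single (-(n : ℤ)) (Polynomial.X ^ m), ?_⟩
  rw [Phi_single, map_pow, Polynomial.aeval_X, zpow_neg, zpow_natCast, ← inv_pow,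
    Units.val_pow_eq_pow_val]

end

end Statement11Aux


open Statement11Aux

theorem statement11 (B : Type*) [Ring B] [Algebra (Polynomial ℂ) B]
    (u g : Bˣ) (t : B)
    (hrel : (u : B) * t = (t + algebraMap (Polynomial ℂ) B Polynomial.X) * (u : B))
    (hgt : (g : B) * t = t * (g : B))
    (hgam : (u : B) * (g : B) * ((u⁻¹ : Bˣ) : B) = t * (g : B))
    (hLI : LinearIndependent (Polynomial ℂ)
      (fun p : ℤ × ℕ => ((u ^ p.1 : Bˣ) : B) * t ^ p.2))
    (n : ℕ) (hn : 0 < n) (a : ℕ →₀ Polynomial ℂ) (b : Fin n → Polynomial ℂ) :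
    letI P : B :=
      a.sum (fun m cm => cm • ((((u⁻¹ : Bˣ) : B) * t) ^ n * t ^ m)) +
      ∑ i : Fin n, b i • ((((u⁻¹ : Bˣ) : B) * t) ^ (i : ℕ) *
        ((u ^ ((i : ℕ) - (n : ℤ)) : Bˣ) : B))
    (((g⁻¹ : Bˣ) : B) * P * (g : B) ∈
        Algebra.adjoin (Polynomial ℂ) ({(u : B), ((u⁻¹ : Bˣ) : B), t} : Set B)) ↔
      b = 0 := by
  classical
  have hLI' : LinearIndependent (Polynomial ℂ) (e u t) := hLI
  have hP : ((g⁻¹ : Bˣ) : B) *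
      (a.sum (fun m cm => cm • ((((u⁻¹ : Bˣ) : B) * t) ^ n * t ^ m)) +
       ∑ i : Fin n, b i • ((((u⁻¹ : Bˣ) : B) * t) ^ (i : ℕ) *
         ((u ^ ((i : ℕ) - (n : ℤ)) : Bˣ) : B))) * (g : B)
      = a.sum (fun m cm => cm • ((((u⁻¹ : Bˣ) : B)) ^ n * t ^ m)) +
        ∑ i : Fin n, b i • ((((u⁻¹ : Bˣ) : B)) ^ (i : ℕ) *
          (cjA g ((u⁻¹ : Bˣ) : B)) ^ (n - (i : ℕ))) := by
    rw [← cjA_apply, map_add]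
    congr 1
    · rw [map_finsuppSum]
      refine Finsupp.sum_congr fun m _ => ?_
      rw [map_smul, map_mul, map_pow, map_pow, cjA_uinv_t u t g hgt hgam, cjA_t t g hgt]
    · rw [map_sum]
      refine Finset.sum_congr rfl fun i _ => ?_
      rw [map_smul, map_mul, map_pow, cjA_uinv_t u t g hgt hgam,
        val_zpow_sub u (i : ℕ) n i.isLt, map_pow]
  rw [hP]
  constructor
  · intro hmem
    have h1 : (a.sum (fun m cm => cm • ((((u⁻¹ : Bˣ) : B)) ^ n * t ^ m)) +
        ∑ i : Fin n, b i • ((((u⁻¹ : Bˣ) : B)) ^ (i : ℕ) *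
          (cjA g ((u⁻¹ : Bˣ) : B)) ^ (n - (i : ℕ)))) ∈ LinearMap.range (Phi u t) :=
      Submodule.mem_toSubalgebra.mp (adjoin_le_range u t hrel hmem)
    have hG : (a.sum (fun m cm => cm • ((((u⁻¹ : Bˣ) : B)) ^ n * t ^ m)))
        ∈ LinearMap.range (Phi u t) := by
      rw [Finsupp.sum]
      exact Submodule.sum_mem _ fun m _ => Submodule.smul_mem _ _ (mono_mem_range u t n m)
    have hQ : (∑ i : Fin n, b i • ((((u⁻¹ : Bˣ) : B)) ^ (i : ℕ) *
        (cjA g ((u⁻¹ : Bˣ) : B)) ^ (n - (i : ℕ)))) ∈ LinearMap.range (Phi u t) := by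
      have := Submodule.sub_mem _ h1 hG
      simpa using this
    obtain ⟨F, hF⟩ := hQ
    have hQtu : (∑ i : Fin n, b i • ((((u⁻¹ : Bˣ) : B)) ^ (i : ℕ) *
          (cjA g ((u⁻¹ : Bˣ) : B)) ^ (n - (i : ℕ)))) * (t * (u : B)) ^ n
        = Phi u t (Finsupp.single 0 (∑ i : Fin n, b i • pchain (i : ℕ))) := by
      rw [Finset.sum_mul]
      have hterm : ∀ i : Fin n, (b i • ((((u⁻¹ : Bˣ) : B)) ^ (i : ℕ) *
            (cjA g ((u⁻¹ : Bˣ) : B)) ^ (n - (i : ℕ)))) * (t * (u : B)) ^ n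
          = b i • Polynomial.aeval t (pchain (i : ℕ)) := by
        intro i
        rw [smul_mul_assoc]
        congr 1
        have hsplit : (t * (u : B)) ^ n = (t * (u : B)) ^ (n - (i : ℕ)) * (t * (u : B)) ^ (i : ℕ) := by
          rw [← pow_add, Nat.sub_add_cancel i.isLt.le]
        rw [mul_assoc, hsplit, ← mul_assoc ((cjA g ((u⁻¹ : Bˣ) : B)) ^ (n - (i : ℕ))),
          spow_mul_tupow u t g hgt hgam, one_mul, uinv_pow_mul_tu_pow u t hrel]
      rw [Finset.sum_congr rfl (fun i _ => hterm i), Phi_single, zpow_zero, Units.val_one, one_mul, map_sum]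
      simp only [map_smul]
    have hFtu := Phi_mul_tu_pow u t hrel n F
    rw [hF, hQtu] at hFtu
    have heq : Finsupp.single (0 : ℤ) (∑ i : Fin n, b i • pchain (i : ℕ))
        = F.sum fun k q => Finsupp.single (k + (n : ℤ))
            (q.comp ((Polynomial.X : Polynomial (Polynomial ℂ))
              - Polynomial.C ((n : ℤ) • Polynomial.X)) * pchain n) :=
      Phi_injective u t hLI' hFtu
    have happ := congrArg (fun G => G (0 : ℤ)) heq
    simp only [Finsupp.single_eq_same] at happ
    have hRHS : (F.sum fun k q => Finsupp.single (k + (n : ℤ))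
            (q.comp ((Polynomial.X : Polynomial (Polynomial ℂ))
              - Polynomial.C ((n : ℤ) • Polynomial.X)) * pchain n)) (0 : ℤ)
        = (F (-(n : ℤ))).comp ((Polynomial.X : Polynomial (Polynomial ℂ))
            - Polynomial.C ((n : ℤ) • Polynomial.X)) * pchain n := by
      rw [Finsupp.sum_apply, Finsupp.sum, Finset.sum_eq_single (-(n : ℤ))]
      · rw [Finsupp.single_apply, if_pos (by ring)]
      · intro k _ hkne
        rw [Finsupp.single_apply, if_neg]
        intro hc
        exact hkne (by linarith)
      · intro h0
        rw [Finsupp.notMem_support_iff.mp h0, Polynomial.zero_comp, zero_mul,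
          Finsupp.single_zero, Finsupp.coe_zero, Pi.zero_apply]
    rw [hRHS] at happ
    have hf0 : (∑ i : Fin n, b i • pchain (i : ℕ)) = 0 := by
      by_cases hq : F (-(n : ℤ)) = 0
      · rw [happ, hq, Polynomial.zero_comp, zero_mul]
      · exfalso
        have hcomp_ne : (F (-(n : ℤ))).comp ((Polynomial.X : Polynomial (Polynomial ℂ))
            - Polynomial.C ((n : ℤ) • Polynomial.X)) ≠ 0 := by
          intro hc
          rcases Polynomial.comp_eq_zero_iff.mp hc with h | ⟨-, h⟩
          · exact hq h
          · have h2 := congrArg Polynomial.natDegree h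
            rw [Polynomial.natDegree_X_sub_C, Polynomial.natDegree_C] at h2
            exact one_ne_zero h2
        have hpn : pchain n ≠ 0 := (pchain_spec n).1.ne_zero
        have hdegf : (∑ i : Fin n, b i • pchain (i : ℕ)).natDegree < n := by
          have hle : (∑ i : Fin n, b i • pchain (i : ℕ)).natDegree ≤ n - 1 := by
            apply Polynomial.natDegree_sum_le_of_forall_le
            intro i _
            exact (Polynomial.natDegree_smul_le _ _).trans
              (by rw [(pchain_spec _).2]; omega)
          omega
        have hdegge : n ≤ (∑ i : Fin n, b i • pchain (i : ℕ)).natDegree := by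
          rw [happ, Polynomial.natDegree_mul hcomp_ne hpn, (pchain_spec n).2]
          omega
        omega
    exact fin_indep b hf0
  · intro hb
    rw [hb]
    simp only [Pi.zero_apply, zero_smul, Finset.sum_const_zero, add_zero]
    rw [Finsupp.sum]
    exact sum_mem fun m _ =>
      Subalgebra.smul_mem _ (mono_mem_adjoin u t n m) _
end
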